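/- arXiv:1812.03393 — 3 statements merged into one kernel-verified Lean document; each statement's English description precedes it below -/
import Mathlib

section
/- Let μ be a positive Borel measure on ℂ₊ such that ∫_{ℂ₊} dμ(s)/|s+w|^2 ≤ C/Re(w) for all w ∈ ℂ₊. Then for every Carleson square Q_{a,h} = {x+iy : 0 < x ≤ h, a−h/2 ≤ y ≤ a+h/2} one has μ(Q_{a,h}) ≤ C' h, where C' is an absolute constant multiple of C. -/
open MeasureTheory Set Complex ENNReal

/-- The Carleson square `Q_{a,h} = {x+iy : 0 < x ≤ h, a-h/2 ≤ y ≤ a+h/2}`. -/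
def carlesonSquare (a h : ℝ) : Set ℂ :=
  {z : ℂ | 0 < z.re ∧ z.re ≤ h ∧ a - h / 2 ≤ z.im ∧ z.im ≤ a + h / 2}

lemma carlesonSquare_measurable (a h : ℝ) : MeasurableSet (carlesonSquare a h) := by
  have h1 : Measurable fun z : ℂ => z.re := Complex.measurable_re
  have h2 : Measurable fun z : ℂ => z.im := Complex.measurable_im
  exact (measurableSet_lt measurable_const h1).inter
    ((measurableSet_le h1 measurable_const).inter
      ((measurableSet_le measurable_const h2).inter (measurableSet_le h2 measurable_const)))

/-- the reproducing-kernel condition `∫ dμ(s)/|s+w|² ≤ C/Re w` implies the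
Carleson condition `μ(Q_{a,h}) ≤ C' h` with `C'` an absolute constant multiple of `C`. -/
theorem kernel_bound_implies_carleson :
    ∃ K : ℝ, 0 < K ∧ ∀ (μ : Measure ℂ) (C : ℝ),
      (∀ w : ℂ, 0 < w.re →
        ∫⁻ s, ENNReal.ofReal (1 / ‖s + w‖ ^ 2) ∂μ ≤ ENNReal.ofReal (C / w.re)) →
      ∀ a h : ℝ, 0 < h → μ (carlesonSquare a h) ≤ ENNReal.ofReal (K * C * h) := by
  refine ⟨5, by norm_num, fun μ C hyp a h hh => ?_⟩
  set w : ℂ := Complex.mk h (-a) with hw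
  have hwre : w.re = h := rfl
  have hint : ∫⁻ s, ENNReal.ofReal (1 / ‖s + w‖ ^ 2) ∂μ ≤ ENNReal.ofReal (C / h) := by
    simpa [hwre] using hyp w (by simpa [hwre] using hh)
  set c : ℝ≥0∞ := ENNReal.ofReal (1 / (5 * h ^ 2)) with hc
  have hQ := carlesonSquare_measurable a h
  -- pointwise lower bound on the square
  have hpt : ∀ s : ℂ, (carlesonSquare a h).indicator (fun _ => c) s ≤
      ENNReal.ofReal (1 / ‖s + w‖ ^ 2) := by
    intro s
    by_cases hs : s ∈ carlesonSquare a h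
    · rw [Set.indicator_of_mem hs]
      obtain ⟨h0, h1, h2, h3⟩ := hs
      apply ENNReal.ofReal_le_ofReal
      have hre : (s + w).re = s.re + h := by simp [hw]
      have him : (s + w).im = s.im - a := by simp [hw]; ring
      have hnorm : ‖s + w‖ ^ 2 = (s.re + h) ^ 2 + (s.im - a) ^ 2 := by
        rw [Complex.sq_norm, Complex.normSq_apply, hre, him]
        ring
      have hpos : 0 < ‖s + w‖ ^ 2 := by
        rw [hnorm]; positivity
      have hle : ‖s + w‖ ^ 2 ≤ 5 * h ^ 2 := by
        rw [hnorm]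
        have e1 : (s.re + h) ^ 2 ≤ (2 * h) ^ 2 := by nlinarith
        have e2 : (s.im - a) ^ 2 ≤ (h / 2) ^ 2 := by nlinarith
        nlinarith
      exact one_div_le_one_div_of_le hpos hle
    · rw [Set.indicator_of_notMem hs]; exact zero_le
  have key : c * μ (carlesonSquare a h) ≤ ENNReal.ofReal (C / h) := by
    calc c * μ (carlesonSquare a h)
        = ∫⁻ s, (carlesonSquare a h).indicator (fun _ => c) s ∂μ := by
          exact (lintegral_indicator_const hQ c).symm
      _ ≤ ∫⁻ s, ENNReal.ofReal (1 / ‖s + w‖ ^ 2) ∂μ := lintegral_mono hpt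
      _ ≤ ENNReal.ofReal (C / h) := hint
  have hc_pos : 0 < c := by
    rw [hc]; apply ENNReal.ofReal_pos.2; positivity
  have hc_ne : c ≠ ∞ := ENNReal.ofReal_ne_top
  have hcinv : c⁻¹ = ENNReal.ofReal (5 * h ^ 2) := by
    rw [hc, one_div, ENNReal.ofReal_inv_of_pos (by positivity), inv_inv]
  calc μ (carlesonSquare a h)
      = c⁻¹ * (c * μ (carlesonSquare a h)) := by
        rw [← mul_assoc, ENNReal.inv_mul_cancel hc_pos.ne' hc_ne, one_mul]
    _ ≤ c⁻¹ * ENNReal.ofReal (C / h) := mul_le_mul_right key _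
    _ ≤ ENNReal.ofReal (5 * C * h) := by
        rw [hcinv, ← ENNReal.ofReal_mul (by positivity)]
        apply ENNReal.ofReal_le_ofReal
        apply le_of_eq
        field_simp
end

section
/- Let ν̃ be a positive Borel measure on [0,∞) satisfying the Δ₂-condition sup_{t>0} ν̃[0,2t)/ν̃[0,t) < ∞, and define the weight w(t) = 2π ∫_0^∞ e^{-2rt} dν̃(r). Then there is a constant c > 0 such that w(t) ≤ c·w(2t) for all t > 0. -/
open MeasureTheory Set ENNReal Filter Topology

set_option maxHeartbeats 1000000

/-- under the Δ₂-condition `ν̃[0,2t) ≤ D·ν̃[0,t)`, the weight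
`w(t) = 2π ∫₀^∞ e^{-2rt} dν̃(r)` satisfies `w(t) ≤ c·w(2t)` for a constant `c > 0`.
(The factor `2π` cancels from both sides.) -/
theorem zen_weight_doubling (ν : Measure ℝ) (D : ℝ≥0∞) (hD : D ≠ ⊤)
    (hΔ : ∀ t : ℝ, 0 < t → ν (Ico 0 (2 * t)) ≤ D * ν (Ico 0 t))
    (hpos : ∀ t : ℝ, 0 < t → 0 < ν (Ico 0 t)) :
    ∃ c : ℝ, 0 < c ∧ ∀ t : ℝ, 0 < t →
      (∫⁻ r in Ici (0:ℝ), ENNReal.ofReal (Real.exp (-2 * r * t)) ∂ν) ≤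
        ENNReal.ofReal c *
          ∫⁻ r in Ici (0:ℝ), ENNReal.ofReal (Real.exp (-2 * r * (2 * t))) ∂ν := by
  classical
  set d : ℝ := max D.toReal 1 with hd
  have hd1 : (1:ℝ) ≤ d := le_max_right _ _
  have hd0 : (0:ℝ) < d := lt_of_lt_of_le one_pos hd1
  have hDd : D ≤ ENNReal.ofReal d :=
    (ENNReal.ofReal_toReal hD).symm.le.trans (ENNReal.ofReal_le_ofReal (le_max_left _ _))
  -- the summable series controlling dyadic pieces
  set h : ℕ → ℝ := fun k => Real.exp (-(2 ^ k : ℝ)) * d ^ (k + 1) with hh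
  have hhpos : ∀ k, 0 < h k := fun k => mul_pos (Real.exp_pos _) (pow_pos hd0 _)
  have hsum : Summable h := by
    refine summable_of_ratio_test_tendsto_lt_one (l := 0) one_pos
      (Filter.Eventually.of_forall fun n => (hhpos n).ne') ?_
    have heq : (fun n : ℕ => ‖h (n + 1)‖ / ‖h n‖)
        = fun n : ℕ => d * Real.exp (-(2 ^ n : ℝ)) := by
      funext n
      rw [Real.norm_of_nonneg (hhpos (n + 1)).le, Real.norm_of_nonneg (hhpos n).le, hh]
      show Real.exp (-(2 ^ (n+1) : ℝ)) * d ^ (n+1+1) / (Real.exp (-(2 ^ n : ℝ)) * d ^ (n+1))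
        = d * Real.exp (-(2 ^ n : ℝ))
      have h2 : Real.exp (-(2 ^ (n+1) : ℝ)) = Real.exp (-(2 ^ n : ℝ)) * Real.exp (-(2 ^ n : ℝ)) := by
        rw [← Real.exp_add]; congr 1; ring
      rw [h2]
      have he : Real.exp (-(2 ^ n : ℝ)) ≠ 0 := (Real.exp_pos _).ne'
      have hdn : d ^ (n + 1) ≠ 0 := (pow_pos hd0 _).ne'
      field_simp
      ring
    rw [heq]
    have h1 : Tendsto (fun n : ℕ => Real.exp (-(2 ^ n : ℝ))) atTop (𝓝 0) :=
      Real.tendsto_exp_atBot.comp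
        (tendsto_neg_atTop_atBot.comp (tendsto_pow_atTop_atTop_of_one_lt one_lt_two))
    simpa using h1.const_mul d
  set S : ℝ := ∑' k, h k with hS
  have hS0 : 0 ≤ S := tsum_nonneg fun k => (hhpos k).le
  refine ⟨(1 + S) * Real.exp 2, by positivity, fun t ht => ?_⟩
  set a : ℝ := 1 / (2 * t) with ha
  have ha0 : 0 < a := by positivity
  have hat : 2 * a * t = 1 := by rw [ha]; field_simp
  -- dyadic pieces
  set f : ℕ → Set ℝ := fun n => match n with
    | 0 => Ico 0 a
    | m + 1 => Ico ((2:ℝ) ^ m * a) ((2:ℝ) ^ (m + 1) * a) with hf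
  -- the covering
  have cover : Ici (0:ℝ) ⊆ ⋃ n, f n := by
    intro r hr
    have hr0 : (0:ℝ) ≤ r := hr
    have hex : ∃ n : ℕ, r < 2 ^ n * a := by
      obtain ⟨n, hn⟩ := pow_unbounded_of_one_lt (r / a) (y := (2:ℝ)) one_lt_two
      exact ⟨n, by rwa [div_lt_iff₀ ha0] at hn⟩
    obtain ⟨n, hn, hmin⟩ : ∃ n : ℕ, r < 2 ^ n * a ∧ ∀ m, m < n → ¬ r < 2 ^ m * a :=
      ⟨Nat.find hex, Nat.find_spec hex, fun m hm => Nat.find_min hex hm⟩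
    cases n with
    | zero =>
        refine mem_iUnion.2 ⟨0, ?_⟩
        simpa [hf] using And.intro hr0 (by simpa using hn)
    | succ m =>
        refine mem_iUnion.2 ⟨m + 1, ?_⟩
        have := not_lt.1 (hmin m (Nat.lt_succ_self m))
        exact ⟨this, hn⟩
  -- doubling iterated
  have doubling : ∀ n : ℕ, ν (Ico 0 ((2:ℝ) ^ n * a)) ≤ D ^ n * ν (Ico 0 a) := by
    intro n
    induction n with
    | zero => simp
    | succ m ih =>
        have h2 : (2:ℝ) ^ (m + 1) * a = 2 * ((2:ℝ) ^ m * a) := by ring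
        have hpos' : 0 < (2:ℝ) ^ m * a := by positivity
        calc ν (Ico 0 ((2:ℝ) ^ (m+1) * a)) = ν (Ico 0 (2 * ((2:ℝ) ^ m * a))) := by rw [h2]
          _ ≤ D * ν (Ico 0 ((2:ℝ) ^ m * a)) := hΔ _ hpos'
          _ ≤ D * (D ^ m * ν (Ico 0 a)) := mul_le_mul_right ih _
          _ = D ^ (m+1) * ν (Ico 0 a) := by rw [pow_succ]; ring
  -- the ENNReal coefficients
  set E : ℕ → ℝ≥0∞ := fun n => match n with
    | 0 => 1
    | m + 1 => ENNReal.ofReal (Real.exp (-(2 ^ m : ℝ))) with hE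
  -- bound on each piece
  have piece : ∀ n : ℕ, (∫⁻ r in f n, ENNReal.ofReal (Real.exp (-2 * r * t)) ∂ν)
      ≤ E n * ν (Ico 0 ((2:ℝ) ^ n * a)) := by
    intro n
    have hsub : f n ⊆ Ico 0 ((2:ℝ) ^ n * a) := by
      cases n with
      | zero => simp [hf]
      | succ m =>
          intro r hr
          exact ⟨le_trans (by positivity) hr.1, hr.2⟩
    have hpt : ∀ r ∈ f n, ENNReal.ofReal (Real.exp (-2 * r * t)) ≤ E n := by
      cases n with
      | zero =>
          intro r hr
          have : Real.exp (-2 * r * t) ≤ 1 := by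
            rw [← Real.exp_zero]
            apply Real.exp_le_exp.2
            have : 0 ≤ r := hr.1
            nlinarith
          calc ENNReal.ofReal (Real.exp (-2 * r * t)) ≤ ENNReal.ofReal 1 :=
              ENNReal.ofReal_le_ofReal this
            _ = E 0 := by simp [hE]
      | succ m =>
          intro r hr
          have hr1 : (2:ℝ) ^ m * a ≤ r := hr.1
          have : Real.exp (-2 * r * t) ≤ Real.exp (-(2 ^ m : ℝ)) := by
            apply Real.exp_le_exp.2
            nlinarith [pow_pos (zero_lt_two (α := ℝ)) m]
          exact ENNReal.ofReal_le_ofReal this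
    calc (∫⁻ r in f n, ENNReal.ofReal (Real.exp (-2 * r * t)) ∂ν)
        ≤ ∫⁻ _ in f n, E n ∂ν := setLIntegral_mono measurable_const hpt
      _ = E n * ν (f n) := setLIntegral_const _ _
      _ ≤ E n * ν (Ico 0 ((2:ℝ) ^ n * a)) := mul_le_mul_right (measure_mono hsub) _
  -- coefficient bound
  set G : ℕ → ℝ := fun n => Nat.casesOn n 1 h with hG
  have hG0 : ∀ k, 0 ≤ G k := by
    intro k; cases k with
    | zero => exact one_pos.le
    | succ m => exact (hhpos m).le
  have coeff : ∀ n : ℕ, E n * D ^ n ≤ ENNReal.ofReal (G n) := by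
    intro n
    cases n with
    | zero =>
        show (1:ℝ≥0∞) * D ^ 0 ≤ ENNReal.ofReal 1
        simp
    | succ m =>
        show E (m+1) * D ^ (m+1) ≤ ENNReal.ofReal (h m)
        calc E (m+1) * D ^ (m+1)
            ≤ ENNReal.ofReal (Real.exp (-(2 ^ m : ℝ))) * (ENNReal.ofReal d) ^ (m+1) :=
              mul_le_mul_right (pow_le_pow_left' hDd _) _
          _ = ENNReal.ofReal (h m) := by
              rw [← ENNReal.ofReal_pow hd0.le, ← ENNReal.ofReal_mul (Real.exp_pos _).le]
  -- main upper bound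
  have upper : (∫⁻ r in Ici (0:ℝ), ENNReal.ofReal (Real.exp (-2 * r * t)) ∂ν)
      ≤ ENNReal.ofReal (1 + S) * ν (Ico 0 a) := by
    calc (∫⁻ r in Ici (0:ℝ), ENNReal.ofReal (Real.exp (-2 * r * t)) ∂ν)
        ≤ ∫⁻ r in ⋃ n, f n, ENNReal.ofReal (Real.exp (-2 * r * t)) ∂ν :=
          lintegral_mono_set cover
      _ ≤ ∑' n, ∫⁻ r in f n, ENNReal.ofReal (Real.exp (-2 * r * t)) ∂ν :=
          lintegral_iUnion_le _ _
      _ ≤ ∑' n, E n * (D ^ n * ν (Ico 0 a)) := by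
          refine ENNReal.tsum_le_tsum fun n => ?_
          exact le_trans (piece n) (mul_le_mul_right (doubling n) _)
      _ = ∑' n, (E n * D ^ n) * ν (Ico 0 a) := by
          congr 1; funext n; ring
      _ ≤ ∑' n, ENNReal.ofReal (G n) * ν (Ico 0 a) :=
          ENNReal.tsum_le_tsum fun n => mul_le_mul_left (coeff n) _
      _ = (∑' n, ENNReal.ofReal (G n)) * ν (Ico 0 a) :=
          ENNReal.tsum_mul_right
      _ = ENNReal.ofReal (1 + S) * ν (Ico 0 a) := by
          congr 1
          rw [tsum_eq_zero_add' (f := fun n => ENNReal.ofReal (G n)) ENNReal.summable]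
          have e1 : ∑' (b : ℕ), ENNReal.ofReal (G (b + 1)) = ENNReal.ofReal S := by
            rw [hS, ENNReal.ofReal_tsum_of_nonneg (fun k => (hhpos k).le) hsum]
          have e0 : ENNReal.ofReal (G 0) = ENNReal.ofReal 1 := rfl
          rw [e0, e1]
          first
            | rfl
            | exact (ENNReal.ofReal_add one_pos.le hS0).symm
  -- lower bound for w(2t)
  have lower : ENNReal.ofReal (Real.exp (-2)) * ν (Ico 0 a)
      ≤ ∫⁻ r in Ici (0:ℝ), ENNReal.ofReal (Real.exp (-2 * r * (2 * t))) ∂ν := by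
    calc ENNReal.ofReal (Real.exp (-2)) * ν (Ico 0 a)
        = ∫⁻ _ in Ico (0:ℝ) a, ENNReal.ofReal (Real.exp (-2)) ∂ν :=
          (setLIntegral_const _ _).symm
      _ ≤ ∫⁻ r in Ico (0:ℝ) a, ENNReal.ofReal (Real.exp (-2 * r * (2 * t))) ∂ν := by
          refine setLIntegral_mono ?_ ?_
          · exact (Real.measurable_exp.comp (by fun_prop)).ennreal_ofReal
          · intro r hr
            apply ENNReal.ofReal_le_ofReal
            apply Real.exp_le_exp.2
            have h1 : r < a := hr.2
            nlinarith
      _ ≤ ∫⁻ r in Ici (0:ℝ), ENNReal.ofReal (Real.exp (-2 * r * (2 * t))) ∂ν :=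
          lintegral_mono_set (fun r hr => hr.1)
  -- combine
  have key : ν (Ico 0 a) ≤ ENNReal.ofReal (Real.exp 2) *
      ∫⁻ r in Ici (0:ℝ), ENNReal.ofReal (Real.exp (-2 * r * (2 * t))) ∂ν := by
    calc ν (Ico 0 a) = (ENNReal.ofReal (Real.exp 2) * ENNReal.ofReal (Real.exp (-2))) *
          ν (Ico 0 a) := by
          rw [← ENNReal.ofReal_mul (Real.exp_pos _).le, ← Real.exp_add]
          norm_num
      _ = ENNReal.ofReal (Real.exp 2) * (ENNReal.ofReal (Real.exp (-2)) * ν (Ico 0 a)) := by ring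
      _ ≤ _ := mul_le_mul_right lower _
  calc (∫⁻ r in Ici (0:ℝ), ENNReal.ofReal (Real.exp (-2 * r * t)) ∂ν)
      ≤ ENNReal.ofReal (1 + S) * ν (Ico 0 a) := upper
    _ ≤ ENNReal.ofReal (1 + S) * (ENNReal.ofReal (Real.exp 2) *
        ∫⁻ r in Ici (0:ℝ), ENNReal.ofReal (Real.exp (-2 * r * (2 * t))) ∂ν) :=
        mul_le_mul_right key _
    _ = ENNReal.ofReal ((1 + S) * Real.exp 2) *
        ∫⁻ r in Ici (0:ℝ), ENNReal.ofReal (Real.exp (-2 * r * (2 * t))) ∂ν := by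
        rw [ENNReal.ofReal_mul (by positivity)]; ring
end

section
/- The function h(t) = 1/√t defines a bounded truncated Hankel operator (Γ_h u)(t) = ∫_0^T u(τ)/√(t+τ) dτ on L²(0,T) for every finite T > 0, but the corresponding Hankel operator on L²(0,∞) with the same kernel 1/√(t+τ) is unbounded. -/
open MeasureTheory Set Complex ENNReal

lemma kernel_sep_bound {t τ : ℝ} (ht : 0 < t) (hτ : 0 < τ) :
    1 / Real.sqrt (t + τ) ≤ (1 / Real.sqrt (Real.sqrt t)) * (1 / Real.sqrt (Real.sqrt τ)) := by
  rw [div_mul_div_comm, one_mul]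
  have h1 : Real.sqrt (Real.sqrt t) * Real.sqrt (Real.sqrt τ) ≤ Real.sqrt (t + τ) := by
    rw [← Real.sqrt_mul (Real.sqrt_nonneg t), ← Real.sqrt_mul ht.le]
    apply Real.sqrt_le_sqrt
    rw [Real.sqrt_mul ht.le]
    nlinarith [Real.sq_sqrt ht.le, Real.sq_sqrt hτ.le, sq_nonneg (Real.sqrt t - Real.sqrt τ),
      Real.sqrt_nonneg t, Real.sqrt_nonneg τ]
  exact one_div_le_one_div_of_le (by positivity) h1

/-- the kernel `1/√(t+τ)` defines a bounded truncated Hankel form on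
`L²(0,T)` for every finite `T > 0`, but the corresponding Hankel form on `L²(0,∞)` is
unbounded (no constant `C` works, even for nonnegative functions). -/
theorem hankel_sqrt_kernel_bounded_finite_unbounded_infinite :
    (∀ T : ℝ, 0 < T → ∃ C : ℝ, ∀ f g : ℝ → ℂ,
      MemLp f 2 (volume.restrict (Ioc 0 T)) → MemLp g 2 (volume.restrict (Ioc 0 T)) →
      (‖∫ t in Ioc (0:ℝ) T, ∫ τ in Ioc (0:ℝ) T,
          ((1 / Real.sqrt (t + τ) : ℝ) : ℂ) * f t * (starRingEnd ℂ) (g τ)‖₊ : ℝ≥0∞) ≤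
        ENNReal.ofReal C * eLpNorm f 2 (volume.restrict (Ioc 0 T)) *
          eLpNorm g 2 (volume.restrict (Ioc 0 T))) ∧
    ¬ (∃ C : ℝ, ∀ f g : ℝ → ℝ, (∀ t, 0 ≤ f t) → (∀ t, 0 ≤ g t) →
      MemLp f 2 (volume.restrict (Ioi 0)) → MemLp g 2 (volume.restrict (Ioi 0)) →
      (∫⁻ t in Ioi (0:ℝ), ∫⁻ τ in Ioi (0:ℝ),
          ENNReal.ofReal (f t * g τ / Real.sqrt (t + τ))) ≤
        ENNReal.ofReal C * eLpNorm f 2 (volume.restrict (Ioi 0)) *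
          eLpNorm g 2 (volume.restrict (Ioi 0))) := by
  constructor
  · intro T hT
    set μT := volume.restrict (Ioc (0:ℝ) T) with hμT
    set w : ℝ → ℝ≥0∞ := fun t => ENNReal.ofReal (1 / Real.sqrt (Real.sqrt t)) with hw
    set A : ℝ≥0∞ := ∫⁻ t in Ioc (0:ℝ) T, ENNReal.ofReal (1 / Real.sqrt t) with hA
    -- A is finite
    have hAtop : A ≠ ⊤ := by
      have hint : IntegrableOn (fun t : ℝ => t ^ (-(1/2) : ℝ)) (Ioc 0 T) := by
        have := intervalIntegral.intervalIntegrable_rpow' (a := 0) (b := T)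
          (r := -(1/2)) (by norm_num)
        rwa [intervalIntegrable_iff, uIoc_of_le hT.le] at this
      have hle : A ≤ ∫⁻ t in Ioc (0:ℝ) T, (‖(fun t : ℝ => t ^ (-(1/2) : ℝ)) t‖₊ : ℝ≥0∞) := by
        apply lintegral_mono_ae
        filter_upwards [ae_restrict_mem measurableSet_Ioc] with t ht
        have h1 : (1 : ℝ) / Real.sqrt t = t ^ (-(1/2) : ℝ) := by
          rw [Real.rpow_neg ht.1.le, one_div, Real.sqrt_eq_rpow]
        rw [h1, ← enorm_eq_nnnorm, Real.enorm_eq_ofReal (Real.rpow_nonneg ht.1.le _)]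
      exact ne_top_of_le_ne_top hint.2.ne hle
    -- the key one-variable Cauchy–Schwarz estimate
    have key : ∀ h : ℝ → ℂ, MemLp h 2 μT →
        ∫⁻ t, w t * (‖h t‖₊ : ℝ≥0∞) ∂μT ≤ A ^ (1/2 : ℝ) * eLpNorm h 2 μT := by
      intro h hh
      have hcs := ENNReal.lintegral_mul_le_Lp_mul_Lq μT
        Real.HolderConjugate.two_two
        (f := w) (g := fun t => (‖h t‖₊ : ℝ≥0∞))
        ((measurable_const.div ((Real.continuous_sqrt.comp
          Real.continuous_sqrt).measurable)).ennreal_ofReal.aemeasurable)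
        hh.aestronglyMeasurable.enorm
      simp only [Pi.mul_apply] at hcs
      have eq1 : ∫⁻ t, w t ^ (2:ℝ) ∂μT = A := by
        apply lintegral_congr
        intro t
        rw [hw, ENNReal.ofReal_rpow_of_nonneg (by positivity) (by norm_num)]
        congr 1
        rw [show (2:ℝ) = ((2:ℕ):ℝ) by norm_num, Real.rpow_natCast, div_pow, one_pow,
          Real.sq_sqrt (Real.sqrt_nonneg t)]
      have eq2 : (∫⁻ t, (‖h t‖₊ : ℝ≥0∞) ^ (2:ℝ) ∂μT) ^ (1/2:ℝ) = eLpNorm h 2 μT := by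
        rw [eLpNorm_eq_lintegral_rpow_enorm_toReal (by norm_num) (by norm_num)]
        norm_num
        rfl
      calc ∫⁻ t, w t * (‖h t‖₊ : ℝ≥0∞) ∂μT
          ≤ (∫⁻ t, w t ^ (2:ℝ) ∂μT) ^ (1/2:ℝ) *
              (∫⁻ t, (‖h t‖₊ : ℝ≥0∞) ^ (2:ℝ) ∂μT) ^ (1/2:ℝ) := hcs
        _ = A ^ (1/2:ℝ) * eLpNorm h 2 μT := by rw [eq1, eq2]
    refine ⟨A.toReal, fun f g hf hg => ?_⟩
    have hA12 : A ^ (1/2:ℝ) ≠ ⊤ := ENNReal.rpow_ne_top_of_nonneg (by norm_num) hAtop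
    calc (‖∫ t in Ioc (0:ℝ) T, ∫ τ in Ioc (0:ℝ) T,
            ((1 / Real.sqrt (t + τ) : ℝ) : ℂ) * f t * (starRingEnd ℂ) (g τ)‖₊ : ℝ≥0∞)
        ≤ ∫⁻ t in Ioc (0:ℝ) T, (‖∫ τ in Ioc (0:ℝ) T,
            ((1 / Real.sqrt (t + τ) : ℝ) : ℂ) * f t * (starRingEnd ℂ) (g τ)‖₊ : ℝ≥0∞) :=
          enorm_integral_le_lintegral_enorm _
      _ ≤ ∫⁻ t in Ioc (0:ℝ) T, ∫⁻ τ in Ioc (0:ℝ) T,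
            (‖((1 / Real.sqrt (t + τ) : ℝ) : ℂ) * f t * (starRingEnd ℂ) (g τ)‖₊ : ℝ≥0∞) :=
          lintegral_mono fun t => enorm_integral_le_lintegral_enorm _
      _ ≤ ∫⁻ t in Ioc (0:ℝ) T, ∫⁻ τ in Ioc (0:ℝ) T,
            (w t * (‖f t‖₊ : ℝ≥0∞)) * (w τ * (‖g τ‖₊ : ℝ≥0∞)) := by
          apply lintegral_mono_ae
          filter_upwards [ae_restrict_mem measurableSet_Ioc] with t ht
          apply lintegral_mono_ae
          filter_upwards [ae_restrict_mem measurableSet_Ioc] with τ hτ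
          have heq : (‖((1 / Real.sqrt (t + τ) : ℝ) : ℂ) * f t * (starRingEnd ℂ) (g τ)‖₊ : ℝ≥0∞)
              = ENNReal.ofReal (1 / Real.sqrt (t + τ)) * (‖f t‖₊ : ℝ≥0∞) * (‖g τ‖₊ : ℝ≥0∞) := by
            rw [nnnorm_mul, nnnorm_mul, Complex.nnnorm_real, RCLike.nnnorm_conj,
              ENNReal.coe_mul, ENNReal.coe_mul, ← enorm_eq_nnnorm, Real.enorm_eq_ofReal (by positivity)]
          rw [heq]
          have hker : ENNReal.ofReal (1 / Real.sqrt (t + τ)) ≤ w t * w τ := by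
            rw [hw]
            dsimp only
            rw [← ENNReal.ofReal_mul (by positivity)]
            exact ENNReal.ofReal_le_ofReal (kernel_sep_bound ht.1 hτ.1)
          calc ENNReal.ofReal (1 / Real.sqrt (t + τ)) * (‖f t‖₊ : ℝ≥0∞) * (‖g τ‖₊ : ℝ≥0∞)
              ≤ (w t * w τ) * (‖f t‖₊ : ℝ≥0∞) * (‖g τ‖₊ : ℝ≥0∞) := by gcongr
            _ = (w t * (‖f t‖₊ : ℝ≥0∞)) * (w τ * (‖g τ‖₊ : ℝ≥0∞)) := by ring
      _ ≤ ∫⁻ t in Ioc (0:ℝ) T,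
            (w t * (‖f t‖₊ : ℝ≥0∞)) * (A ^ (1/2:ℝ) * eLpNorm g 2 μT) := by
          apply lintegral_mono fun t => ?_
          rw [lintegral_const_mul' _ _
            (ENNReal.mul_ne_top ENNReal.ofReal_ne_top ENNReal.coe_ne_top)]
          exact mul_le_mul_right (key g hg) _
      _ = (∫⁻ t, w t * (‖f t‖₊ : ℝ≥0∞) ∂μT) * (A ^ (1/2:ℝ) * eLpNorm g 2 μT) :=
          lintegral_mul_const' _ _ (ENNReal.mul_ne_top hA12 hg.eLpNorm_ne_top)
      _ ≤ (A ^ (1/2:ℝ) * eLpNorm f 2 μT) * (A ^ (1/2:ℝ) * eLpNorm g 2 μT) :=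
          mul_le_mul_left (key f hf) _
      _ = ENNReal.ofReal A.toReal * eLpNorm f 2 μT * eLpNorm g 2 μT := by
          rw [ENNReal.ofReal_toReal hAtop, mul_mul_mul_comm,
            ← ENNReal.rpow_add_of_nonneg _ _ (by norm_num) (by norm_num)]
          norm_num
          rw [mul_assoc]
  · rintro ⟨C, hC⟩
    set b : ℝ := 2 * |C| + 2 with hb
    have hbpos : 0 < b := by positivity
    set R : ℝ := b ^ 2 with hR
    have hRpos : 0 < R := by positivity
    set f : ℝ → ℝ := (Ioc (0:ℝ) R).indicator (fun _ => (1:ℝ)) with hf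
    have hf0 : ∀ t, 0 ≤ f t := fun t => Set.indicator_nonneg (fun _ _ => zero_le_one) t
    have hμs : (volume.restrict (Ioi (0:ℝ))) (Ioc 0 R) ≠ ⊤ := by
      rw [Measure.restrict_apply measurableSet_Ioc]
      exact ne_top_of_le_ne_top (by simp [Real.volume_Ioc]) (measure_mono inter_subset_left)
    have hfmem : MemLp f 2 (volume.restrict (Ioi 0)) :=
      memLp_indicator_const 2 measurableSet_Ioc 1 (Or.inr hμs)
    have hnorm : eLpNorm f 2 (volume.restrict (Ioi 0)) = (ENNReal.ofReal R) ^ (1/2 : ℝ) := by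
      rw [hf, eLpNorm_indicator_const measurableSet_Ioc (by norm_num) (by norm_num)]
      rw [Measure.restrict_apply measurableSet_Ioc,
        inter_eq_left.2 (Ioc_subset_Ioi_self), Real.volume_Ioc, sub_zero]
      simp
    have hce := hC f f hf0 hf0 hfmem hfmem
    rw [hnorm] at hce
    -- lower bound on the double integral
    have hfone : ∀ t ∈ Ioc (0:ℝ) R, f t = 1 := fun t ht => by
      simp [hf, Set.indicator_of_mem ht]
    have hsqrtR : Real.sqrt R = b := by rw [hR, Real.sqrt_sq hbpos.le]
    set c : ℝ≥0∞ := ENNReal.ofReal (1 / (2 * b)) with hc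
    have hlow : c * ENNReal.ofReal R * ENNReal.ofReal R ≤
        ∫⁻ t in Ioi (0:ℝ), ∫⁻ τ in Ioi (0:ℝ),
          ENNReal.ofReal (f t * f τ / Real.sqrt (t + τ)) := by
      have key : ∀ t ∈ Ioc (0:ℝ) R, ∀ τ ∈ Ioc (0:ℝ) R,
          c ≤ ENNReal.ofReal (f t * f τ / Real.sqrt (t + τ)) := by
        intro t ht τ hτ
        rw [hfone t ht, hfone τ hτ, one_mul]
        apply ENNReal.ofReal_le_ofReal
        apply one_div_le_one_div_of_le (Real.sqrt_pos.2 (by cases ht; cases hτ; linarith))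
        have : Real.sqrt (t + τ) ≤ Real.sqrt (4 * R) := by
          apply Real.sqrt_le_sqrt
          have := ht.2; have := hτ.2; linarith
        calc Real.sqrt (t + τ) ≤ Real.sqrt (4 * R) := this
          _ = 2 * b := by
            rw [Real.sqrt_mul (by norm_num : (0:ℝ) ≤ 4), hsqrtR,
              show (4:ℝ) = 2^2 by norm_num, Real.sqrt_sq (by norm_num : (0:ℝ) ≤ 2)]
      calc c * ENNReal.ofReal R * ENNReal.ofReal R
          = ∫⁻ t in Ioc (0:ℝ) R, (c * ENNReal.ofReal R) := by
            rw [setLIntegral_const, Real.volume_Ioc, sub_zero]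
        _ ≤ ∫⁻ t in Ioc (0:ℝ) R, ∫⁻ τ in Ioi (0:ℝ),
              ENNReal.ofReal (f t * f τ / Real.sqrt (t + τ)) := by
            apply lintegral_mono_ae
            filter_upwards [ae_restrict_mem measurableSet_Ioc] with t ht
            calc c * ENNReal.ofReal R = ∫⁻ τ in Ioc (0:ℝ) R, c := by
                  rw [setLIntegral_const, Real.volume_Ioc, sub_zero]
              _ ≤ ∫⁻ τ in Ioc (0:ℝ) R,
                    ENNReal.ofReal (f t * f τ / Real.sqrt (t + τ)) := by
                  apply lintegral_mono_ae
                  filter_upwards [ae_restrict_mem measurableSet_Ioc] with τ hτ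
                  exact key t ht τ hτ
              _ ≤ _ := lintegral_mono_set Ioc_subset_Ioi_self
        _ ≤ _ := lintegral_mono_set Ioc_subset_Ioi_self
    have hfinal := hlow.trans hce
    -- simplify RHS
    have hrhs : ENNReal.ofReal C * (ENNReal.ofReal R ^ (1/2:ℝ)) * (ENNReal.ofReal R ^ (1/2:ℝ))
        ≤ ENNReal.ofReal (|C| * R) := by
      rw [mul_assoc, ← ENNReal.rpow_add_of_nonneg _ _ (by norm_num) (by norm_num)]
      norm_num
      calc ENNReal.ofReal C * ENNReal.ofReal R ≤ ENNReal.ofReal |C| * ENNReal.ofReal R := by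
            gcongr; exact le_abs_self C
        _ = ENNReal.ofReal (|C| * R) := (ENNReal.ofReal_mul (abs_nonneg C)).symm
        _ ≤ ENNReal.ofReal |C| * ENNReal.ofReal R := (ENNReal.ofReal_mul (abs_nonneg C)).le
    have h2 : ENNReal.ofReal (1 / (2*b) * R * R) ≤ ENNReal.ofReal (|C| * R) := by
      rw [ENNReal.ofReal_mul (by positivity), ENNReal.ofReal_mul (by positivity)]
      exact hfinal.trans hrhs
    rw [ENNReal.ofReal_le_ofReal_iff (by positivity)] at h2
    -- contradiction: 1/(2b) * b^2 * b^2 = b^3/2 > |C| b^2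
    have : b ^ 3 / 2 ≤ |C| * b ^ 2 := by
      calc b^3/2 = 1/(2*b) * R * R := by rw [hR]; field_simp
        _ ≤ |C| * R := h2
        _ = |C| * b^2 := by rw [hR]
    nlinarith [abs_nonneg C, sq_nonneg b]
end
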